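/- Lemma 3.2: Let c : [0,∞) → ℝ^d_{>0} and define P(x,t) := ∏_{i=1}^d e^{−c_i(t)} c_i(t)^{x_i}/x_i!. Then P solves the chemical master equation if and only if c is differentiable, c satisfies the mass-action ODE c'(t) = Σ_k κ_k c(t)^{y_k} ζ_k, and for all x ∈ ℤ^d_{≥0} and all t ≥ 0, Σ_k κ_k c(t)^{y_k} [g_{x,c(t)}(y'_k) − g_{x,c(t)}(y_k)] = 0. Moreover, for any x ∈ ℤ^d_{≥0}, c ∈ ℝ^d_{>0}, and z ∈ ℤ^d_{≥0} with ‖z‖₁ ≤ 1, one has g_{x,c}(z) = 0. -/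

import Mathlib

open Finset

/-- Monomial `u^v = ∏ i, u i ^ v i` (with the convention `0^0 = 1`). -/
noncomputable def monPow {d : ℕ} (u : Fin d → ℝ) (v : Fin d → ℕ) : ℝ :=
  ∏ i, u i ^ v i

/-- The reaction vector `ζ = y' - y`, viewed as a real vector. -/
def zetaVec {d : ℕ} (y y' : Fin d → ℕ) : Fin d → ℝ :=
  fun i => (y' i : ℝ) - (y i : ℝ)

/-- Stochastic mass action intensity `λ_k(x) = κ_k ∏_i x_i!/(x_i - y_{ki})!`,
taken to be `0` when `x` is not componentwise at least `y_k`. -/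
noncomputable def intensity {d : ℕ} (κk : ℝ) (yk : Fin d → ℕ) (x : Fin d → ℕ) : ℝ :=
  κk * ∏ i, ((x i).descFactorial (yk i) : ℝ)

/-- Right-hand side of the deterministic mass-action ODE: `Σ_k κ_k c^{y_k} ζ_k`. -/
noncomputable def massActionRHS {d K : ℕ} (κ : Fin K → ℝ) (y y' : Fin K → Fin d → ℕ)
    (c : Fin d → ℝ) : Fin d → ℝ :=
  ∑ k, (κ k * monPow c (y k)) • zetaVec (y k) (y' k)

/-- `c` is differentiable on `[0,∞)` and solves the mass-action ODE there. -/
def solvesMassAction {d K : ℕ} (κ : Fin K → ℝ) (y y' : Fin K → Fin d → ℕ)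
    (c : ℝ → Fin d → ℝ) : Prop :=
  ∀ t ≥ (0:ℝ), HasDerivWithinAt c (massActionRHS κ y y' (c t)) (Set.Ici 0) t

/-- The dynamical and restricted (DR) complex balance condition: for every complex `z`
with `‖z‖₁ ≥ 2` and every `t ≥ 0`,
`Σ_{k : y_k = z} κ_k c(t)^z = Σ_{k : y'_k = z} κ_k c(t)^{y_k}`. -/
def DRcondition {d K : ℕ} (κ : Fin K → ℝ) (y y' : Fin K → Fin d → ℕ)
    (c : ℝ → Fin d → ℝ) : Prop :=
  ∀ z : Fin d → ℕ, 2 ≤ ∑ i, z i → ∀ t ≥ (0:ℝ),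
    ∑ k ∈ univ.filter (fun k => y k = z), κ k * monPow (c t) z
      = ∑ k ∈ univ.filter (fun k => y' k = z), κ k * monPow (c t) (y k)

/-- `P` solves the chemical master equation on `[0,∞)`:
`∂ₜ P(x,t) = Σ_k λ_k(x-ζ_k) P(x-ζ_k,t) 1{x-ζ_k ≥ 0} - Σ_k λ_k(x) P(x,t)`. -/
def solvesCME {d K : ℕ} (κ : Fin K → ℝ) (y y' : Fin K → Fin d → ℕ)
    (P : (Fin d → ℕ) → ℝ → ℝ) : Prop :=
  ∀ x : Fin d → ℕ, ∀ t ≥ (0:ℝ),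
    HasDerivWithinAt (P x)
      ((∑ k, if ∀ i, y' k i ≤ x i + y k i then
          intensity (κ k) (y k) (fun i => x i + y k i - y' k i)
            * P (fun i => x i + y k i - y' k i) t
        else 0)
       - ∑ k, intensity (κ k) (y k) x * P x t)
      (Set.Ici 0) t

/-- The product-Poisson probability mass function `∏_i e^{-c_i} c_i^{x_i}/x_i!`. -/
noncomputable def productPoisson {d : ℕ} (c : Fin d → ℝ) (x : Fin d → ℕ) : ℝ :=
  ∏ i, Real.exp (-(c i)) * (c i) ^ (x i) / (x i).factorial

/-- The function `g_{x,c}(z) = Σ_j (x_j/c_j - 1) z_j - (x!/(x-z)!) c^{-z} + 1` from Lemma 3.2. -/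
noncomputable def gFun {d : ℕ} (x : Fin d → ℕ) (c : Fin d → ℝ) (z : Fin d → ℕ) : ℝ :=
  (∑ j, ((x j : ℝ) / c j - 1) * (z j : ℝ))
    - (∏ j, ((x j).descFactorial (z j) : ℝ)) * (monPow c z)⁻¹ + 1


namespace CMEAux

open Finset Real

variable {d K : ℕ}

/-- The unit vector `e i` as an element of `ℕ^d`. -/
def eV (i : Fin d) : Fin d → ℕ := fun j => if j = i then 1 else 0

/-- Falling factorial product `D x z = ∏ i, (x i)!/(x i - z i)!`. -/
noncomputable def DF (x z : Fin d → ℕ) : ℝ := ∏ i, ((x i).descFactorial (z i) : ℝ)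

lemma productPoisson_pos (cc : Fin d → ℝ) (x : Fin d → ℕ) (h : ∀ i, 0 < cc i) :
    0 < productPoisson cc x := by
  unfold productPoisson
  exact Finset.prod_pos fun i _ =>
    div_pos (mul_pos (Real.exp_pos _) (pow_pos (h i) _)) (Nat.cast_pos.2 (Nat.factorial_pos _))

lemma productPoisson_zero_pos (cc : Fin d → ℝ) : 0 < productPoisson cc (fun _ => 0) := by
  unfold productPoisson
  exact Finset.prod_pos fun i _ => by
    simp only [pow_zero, Nat.factorial_zero, Nat.cast_one, mul_one, div_one]
    exact Real.exp_pos _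

lemma DF_eV (x : Fin d → ℕ) (i : Fin d) : DF x (eV i) = (x i : ℝ) := by
  unfold DF eV
  rw [Finset.prod_eq_single i]
  · simp
  · intro b _ hb; simp [hb]
  · simp

lemma DF_zero (x : Fin d → ℕ) : DF x (fun _ => 0) = 1 := by
  simp [DF]

lemma monPow_pos {cc : Fin d → ℝ} (h : ∀ i, 0 < cc i) (z : Fin d → ℕ) : 0 < monPow cc z :=
  Finset.prod_pos fun i _ => pow_pos (h i) _

lemma monPow_eV {cc : Fin d → ℝ} (i : Fin d) : monPow cc (eV i) = cc i := by
  unfold monPow eV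
  rw [Finset.prod_eq_single i]
  · simp
  · intro b _ hb; simp [hb]
  · simp

lemma monPow_zero (cc : Fin d → ℝ) : monPow cc (fun _ => 0) = 1 := by simp [monPow]

lemma sum_eV (i : Fin d) : (∑ j, eV i j) = 1 := by
  unfold eV
  rw [Finset.sum_eq_single i] <;> simp +contextual

lemma eV_inj {i i' : Fin d} (h : eV i = eV i') : i = i' := by
  by_contra hne
  have := congrFun h i
  simp [eV, hne] at this

lemma factor_id (c : ℝ) (hc : 0 < c) (x yk y'k : ℕ) (h : y'k ≤ x + yk) :
    ((x + yk - y'k).descFactorial yk : ℝ)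
        * (Real.exp (-c) * c ^ (x + yk - y'k) / (x + yk - y'k).factorial)
    = (x.descFactorial y'k : ℝ)
        * (c ^ yk * (c ^ y'k)⁻¹ * (Real.exp (-c) * c ^ x / x.factorial)) := by
  rcases le_or_gt y'k x with h1 | h1
  · have e1 : ((x + yk - y'k).descFactorial yk : ℝ)
        = ((x + yk - y'k).factorial : ℝ) / ((x - y'k).factorial : ℝ) := by
      rw [eq_div_iff (by positivity), mul_comm]
      have h3 := Nat.factorial_mul_descFactorial (n := x + yk - y'k) (k := yk) (by omega)
      rw [show (x + yk - y'k) - yk = x - y'k by omega] at h3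
      exact_mod_cast h3
    have e2 : (x.descFactorial y'k : ℝ)
        = (x.factorial : ℝ) / ((x - y'k).factorial : ℝ) := by
      rw [eq_div_iff (by positivity), mul_comm]
      exact_mod_cast Nat.factorial_mul_descFactorial h1
    have e3 : c ^ (x + yk - y'k) = c ^ x * c ^ yk * (c ^ y'k)⁻¹ := by
      rw [pow_sub₀ c (ne_of_gt hc) h, pow_add]
    rw [e1, e2, e3]
    have hfx : ((x.factorial : ℝ)) ≠ 0 := by positivity
    have hfx2 : (((x + yk - y'k).factorial : ℝ)) ≠ 0 := by positivity
    have hfx3 : (((x - y'k).factorial : ℝ)) ≠ 0 := by positivity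
    have hcy : (c ^ y'k) ≠ 0 := by positivity
    field_simp
  · have hz1 : (x + yk - y'k).descFactorial yk = 0 := Nat.descFactorial_of_lt (by omega)
    have hz2 : x.descFactorial y'k = 0 := Nat.descFactorial_of_lt h1
    simp [hz1, hz2]

lemma cme_rhs_eq (κ : Fin K → ℝ) (y y' : Fin K → Fin d → ℕ) (cc : Fin d → ℝ)
    (hpos : ∀ i, 0 < cc i) (x : Fin d → ℕ) :
    ((∑ k, if ∀ i, y' k i ≤ x i + y k i then
        intensity (κ k) (y k) (fun i => x i + y k i - y' k i)
          * productPoisson cc (fun i => x i + y k i - y' k i) else 0)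
      - ∑ k, intensity (κ k) (y k) x * productPoisson cc x)
    = productPoisson cc x *
        ∑ k, κ k * (monPow cc (y k) * (monPow cc (y' k))⁻¹ * DF x (y' k) - DF x (y k)) := by
  rw [Finset.mul_sum, ← Finset.sum_sub_distrib]
  refine Finset.sum_congr rfl fun k _ => ?_
  have h2 : intensity (κ k) (y k) x * productPoisson cc x
      = productPoisson cc x * (κ k * DF x (y k)) := by unfold intensity DF; ring
  have h1 : (if ∀ i, y' k i ≤ x i + y k i then
        intensity (κ k) (y k) (fun i => x i + y k i - y' k i)
          * productPoisson cc (fun i => x i + y k i - y' k i) else 0)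
      = productPoisson cc x
          * (κ k * (monPow cc (y k) * (monPow cc (y' k))⁻¹ * DF x (y' k))) := by
    split_ifs with h
    · unfold intensity productPoisson DF monPow
      have key : (∏ i, (((x i + y k i - y' k i).descFactorial (y k i) : ℝ)
            * (Real.exp (-(cc i)) * (cc i) ^ (x i + y k i - y' k i)
                / ((x i + y k i - y' k i).factorial : ℝ))))
          = ∏ i, (((x i).descFactorial (y' k i) : ℝ)
            * ((cc i) ^ (y k i) * ((cc i) ^ (y' k i))⁻¹
                * (Real.exp (-(cc i)) * (cc i) ^ (x i) / ((x i).factorial : ℝ)))) :=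
        Finset.prod_congr rfl fun i _ =>
          factor_id (cc i) (hpos i) (x i) (y k i) (y' k i) (h i)
      calc κ k * (∏ i, ((x i + y k i - y' k i).descFactorial (y k i) : ℝ))
            * ∏ i, Real.exp (-(cc i)) * (cc i) ^ (x i + y k i - y' k i)
                / ((x i + y k i - y' k i).factorial : ℝ)
          = κ k * ∏ i, (((x i + y k i - y' k i).descFactorial (y k i) : ℝ)
              * (Real.exp (-(cc i)) * (cc i) ^ (x i + y k i - y' k i)
                  / ((x i + y k i - y' k i).factorial : ℝ))) := by
            rw [Finset.prod_mul_distrib]; ring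
        _ = κ k * ∏ i, (((x i).descFactorial (y' k i) : ℝ)
              * ((cc i) ^ (y k i) * ((cc i) ^ (y' k i))⁻¹
                  * (Real.exp (-(cc i)) * (cc i) ^ (x i) / ((x i).factorial : ℝ)))) := by
            rw [key]
        _ = (∏ i, Real.exp (-(cc i)) * (cc i) ^ (x i) / ((x i).factorial : ℝ))
              * (κ k * ((∏ i, (cc i) ^ (y k i)) * (∏ i, (cc i) ^ (y' k i))⁻¹
                  * ∏ i, ((x i).descFactorial (y' k i) : ℝ))) := by
            have e : ∀ i : Fin d, ((x i).descFactorial (y' k i) : ℝ)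
                  * ((cc i) ^ (y k i) * ((cc i) ^ (y' k i))⁻¹
                      * (Real.exp (-(cc i)) * (cc i) ^ (x i) / ((x i).factorial : ℝ)))
                = ((cc i) ^ (y k i)) * (((cc i) ^ (y' k i))⁻¹)
                    * (((x i).descFactorial (y' k i) : ℝ)
                    * (Real.exp (-(cc i)) * (cc i) ^ (x i) / ((x i).factorial : ℝ))) :=
              fun i => by ring
            simp only [e]
            rw [Finset.prod_mul_distrib, Finset.prod_mul_distrib, Finset.prod_mul_distrib,
              Finset.prod_inv_distrib]
            ring
    · push_neg at h
      obtain ⟨i0, hi0⟩ := h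
      have hz : ((x i0).descFactorial (y' k i0) : ℝ) = 0 := by
        rw [Nat.descFactorial_of_lt (by omega)]; norm_num
      have hDF : DF x (y' k) = 0 := Finset.prod_eq_zero (Finset.mem_univ i0) hz
      rw [hDF]; ring
  rw [h1, h2]; ring

lemma DF_inv_monPow (x : Fin d → ℕ) (cc : Fin d → ℝ) (z : Fin d → ℕ) :
    DF x z * (monPow cc z)⁻¹
      = (∑ j, ((x j : ℝ) / cc j - 1) * (z j : ℝ)) + 1 - gFun x cc z := by
  unfold gFun DF; ring

lemma bracket_eq (x : Fin d → ℕ) (cc : Fin d → ℝ) (hpos : ∀ i, 0 < cc i)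
    (yk y'k : Fin d → ℕ) :
    monPow cc yk * (monPow cc y'k)⁻¹ * DF x y'k - DF x yk
    = monPow cc yk * ((∑ j, ((x j : ℝ) / cc j - 1) * zetaVec yk y'k j)
        - (gFun x cc y'k - gFun x cc yk)) := by
  have hy : monPow cc yk ≠ 0 := ne_of_gt (monPow_pos hpos yk)
  have step : monPow cc yk * (monPow cc y'k)⁻¹ * DF x y'k - DF x yk
      = monPow cc yk * (DF x y'k * (monPow cc y'k)⁻¹)
        - monPow cc yk * (DF x yk * (monPow cc yk)⁻¹) := by
    have h2 : monPow cc yk * (DF x yk * (monPow cc yk)⁻¹) = DF x yk := by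
      field_simp
    rw [h2]; ring
  rw [step, DF_inv_monPow, DF_inv_monPow]
  have hsub : (∑ j, ((x j : ℝ) / cc j - 1) * (y'k j : ℝ))
      - (∑ j, ((x j : ℝ) / cc j - 1) * (yk j : ℝ))
      = ∑ j, ((x j : ℝ) / cc j - 1) * zetaVec yk y'k j := by
    rw [← Finset.sum_sub_distrib]
    exact Finset.sum_congr rfl fun j _ => by unfold zetaVec; ring
  rw [← hsub]; ring

lemma sum_bracket (κ : Fin K → ℝ) (y y' : Fin K → Fin d → ℕ) (cc : Fin d → ℝ)
    (hpos : ∀ i, 0 < cc i) (x : Fin d → ℕ) :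
    ∑ k, κ k * (monPow cc (y k) * (monPow cc (y' k))⁻¹ * DF x (y' k) - DF x (y k))
    = (∑ k, κ k * monPow cc (y k) * ∑ j, ((x j : ℝ) / cc j - 1) * zetaVec (y k) (y' k) j)
      - ∑ k, κ k * monPow cc (y k) * (gFun x cc (y' k) - gFun x cc (y k)) := by
  rw [← Finset.sum_sub_distrib]
  refine Finset.sum_congr rfl fun k _ => ?_
  rw [bracket_eq x cc hpos]; ring

lemma massAction_dot (κ : Fin K → ℝ) (y y' : Fin K → Fin d → ℕ) (cc : Fin d → ℝ)
    (x : Fin d → ℕ) :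
    ∑ i, massActionRHS κ y y' cc i * ((x i : ℝ) / cc i - 1)
    = ∑ k, κ k * monPow cc (y k) * ∑ j, ((x j : ℝ) / cc j - 1) * zetaVec (y k) (y' k) j := by
  unfold massActionRHS
  simp only [Finset.sum_apply, Pi.smul_apply, smul_eq_mul, Finset.sum_mul]
  rw [Finset.sum_comm]
  refine Finset.sum_congr rfl fun k _ => ?_
  rw [Finset.mul_sum]
  exact Finset.sum_congr rfl fun i _ => by ring

lemma poisson_factor_deriv {u : ℝ → ℝ} {v : ℝ} {s : Set ℝ} {t : ℝ}
    (hu : HasDerivWithinAt u v s t) (hpos : 0 < u t) (n : ℕ) :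
    HasDerivWithinAt (fun τ => Real.exp (-(u τ)) * (u τ) ^ n / (n.factorial : ℝ))
      ((Real.exp (-(u t)) * (u t) ^ n / (n.factorial : ℝ)) * (v * ((n : ℝ) / u t - 1)))
      s t := by
  have h1 : HasDerivWithinAt (fun τ => Real.exp (-(u τ))) (Real.exp (-(u t)) * (-v)) s t :=
    hu.neg.exp
  have h2 : HasDerivWithinAt (fun τ => (u τ) ^ n) ((n : ℝ) * (u t) ^ (n - 1) * v) s t :=
    hu.pow n
  have h3 := (h1.mul h2).div_const (n.factorial : ℝ)
  refine h3.congr_deriv ?_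
  have hne : u t ≠ 0 := ne_of_gt hpos
  rcases n with _ | m
  · simp
  · have hfac : ((m + 1).factorial : ℝ) ≠ 0 := by positivity
    simp only [Nat.add_sub_cancel]
    field_simp
    ring

lemma hasDeriv_productPoisson {c : ℝ → Fin d → ℝ} {v : Fin d → ℝ} {s : Set ℝ} {t : ℝ}
    (hc : HasDerivWithinAt c v s t) (hpos : ∀ i, 0 < c t i) (x : Fin d → ℕ) :
    HasDerivWithinAt (fun τ => productPoisson (c τ) x)
      (productPoisson (c t) x * ∑ i, v i * ((x i : ℝ) / c t i - 1)) s t := by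
  have hci : ∀ i, HasDerivWithinAt (fun τ => c τ i) (v i) s t :=
    fun i => (hasDerivWithinAt_pi.1 hc) i
  have hf : ∀ i ∈ Finset.univ, HasDerivWithinAt
      (fun τ => Real.exp (-(c τ i)) * (c τ i) ^ (x i) / ((x i).factorial : ℝ))
      ((Real.exp (-(c t i)) * (c t i) ^ (x i) / ((x i).factorial : ℝ))
        * (v i * ((x i : ℝ) / c t i - 1))) s t :=
    fun i _ => poisson_factor_deriv (hci i) (hpos i) (x i)
  have h := HasDerivWithinAt.finset_prod hf
  convert h using 1
  · rfl
  · rfl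
  · funext τ
    rw [Finset.prod_apply]
    rfl
  rw [Finset.mul_sum]
  refine Finset.sum_congr rfl fun i _ => ?_
  rw [smul_eq_mul]
  unfold productPoisson
  rw [← Finset.mul_prod_erase Finset.univ
    (fun j => Real.exp (-(c t j)) * (c t j) ^ (x j) / ((x j).factorial : ℝ))
    (Finset.mem_univ i)]
  ring

lemma indep (Z : Finset (Fin d → ℕ)) (β : (Fin d → ℕ) → ℝ)
    (h : ∀ x : Fin d → ℕ, ∑ z ∈ Z, β z * DF x z = 0) : ∀ z ∈ Z, β z = 0 := by
  suffices H : ∀ n : ℕ, ∀ z ∈ Z, (∑ i, z i) = n → β z = 0 from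
    fun z hz => H (∑ i, z i) z hz rfl
  intro n
  induction n using Nat.strong_induction_on with
  | _ n ih =>
    intro z hz hn
    have hx := h z
    have hsingle : ∀ b ∈ Z, b ≠ z → β b * DF z b = 0 := by
      intro b hb hbz
      by_cases hle : ∀ i, b i ≤ z i
      · have hlt : (∑ i, b i) < n := by
          have hlt' : ∑ i, b i < ∑ i, z i := by
            obtain ⟨i0, hi0⟩ : ∃ i, b i ≠ z i := by
              by_contra hcon; push_neg at hcon; exact hbz (funext hcon)
            exact Finset.sum_lt_sum (fun i _ => hle i)
              ⟨i0, Finset.mem_univ i0, lt_of_le_of_ne (hle i0) hi0⟩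
          omega
        rw [ih _ hlt b hb rfl, zero_mul]
      · push_neg at hle; obtain ⟨i0, hi0⟩ := hle
        have hz0 : ((z i0).descFactorial (b i0) : ℝ) = 0 := by
          rw [Nat.descFactorial_of_lt hi0]; norm_num
        rw [DF, Finset.prod_eq_zero (Finset.mem_univ i0) hz0, mul_zero]
    rw [Finset.sum_eq_single z hsingle (fun hzz => absurd hz hzz)] at hx
    have hDF : DF z z = ∏ i, ((z i).factorial : ℝ) := by
      unfold DF
      exact Finset.prod_congr rfl fun i _ => by rw [Nat.descFactorial_self]
    have hDFpos : 0 < DF z z := by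
      rw [hDF]; exact Finset.prod_pos fun i _ => by positivity
    have := mul_eq_zero.1 hx
    rcases this with h' | h'
    · exact h'
    · exact absurd h' (ne_of_gt hDFpos)

lemma gFun_small (x z : Fin d → ℕ) (cc : Fin d → ℝ) (hpos : ∀ i, 0 < cc i)
    (hz : (∑ i, z i) ≤ 1) : gFun x cc z = 0 := by
  by_cases h0 : ∀ j, z j = 0
  · simp [gFun, h0, monPow]
  · push_neg at h0; obtain ⟨j0, hj0⟩ := h0
    have hj1 : z j0 = 1 := by
      have := Finset.single_le_sum (f := z) (fun i _ => Nat.zero_le _) (Finset.mem_univ j0)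
      omega
    have hother : ∀ j, j ≠ j0 → z j = 0 := by
      intro j hj
      have hpair : z j0 + z j ≤ ∑ i, z i := by
        have hsub : ∑ i ∈ ({j0, j} : Finset (Fin d)), z i ≤ ∑ i, z i :=
          Finset.sum_le_sum_of_subset (Finset.subset_univ _)
        rwa [Finset.sum_pair (Ne.symm hj)] at hsub
      omega
    unfold gFun
    rw [Finset.sum_eq_single j0 (fun b _ hb => by rw [hother b hb]; simp)
      (fun h => absurd (Finset.mem_univ j0) h)]
    rw [show (∏ j, ((x j).descFactorial (z j) : ℝ)) = (x j0 : ℝ) by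
      rw [Finset.prod_eq_single j0 (fun b _ hb => by rw [hother b hb]; simp)
        (fun h => absurd (Finset.mem_univ j0) h), hj1, Nat.descFactorial_one]]
    rw [show monPow cc z = cc j0 by
      unfold monPow
      rw [Finset.prod_eq_single j0 (fun b _ hb => by rw [hother b hb]; simp)
        (fun h => absurd (Finset.mem_univ j0) h), hj1, pow_one]]
    rw [hj1]
    have : cc j0 ≠ 0 := ne_of_gt (hpos j0)
    field_simp
    push_cast; ring

lemma productPoisson_eV (u : Fin d → ℝ) (i : Fin d) :
    productPoisson u (eV i) = productPoisson u (fun _ => 0) * u i := by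
  unfold productPoisson eV
  have e : ∀ j : Fin d,
      Real.exp (-(u j)) * u j ^ (if j = i then 1 else 0)
        / (((if j = i then 1 else 0 : ℕ)).factorial : ℝ)
      = (Real.exp (-(u j)) * u j ^ (0 : ℕ) / (((0 : ℕ)).factorial : ℝ))
          * (if j = i then u j else 1) := by
    intro j; by_cases h : j = i <;> simp [h]
  rw [Finset.prod_congr rfl (fun j _ => e j), Finset.prod_mul_distrib,
    Finset.prod_ite_eq' Finset.univ i (fun j => u j), if_pos (Finset.mem_univ i)]

lemma key_alg (κ : Fin K → ℝ) (y y' : Fin K → Fin d → ℕ) (cc : Fin d → ℝ)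
    (hpos : ∀ i, 0 < cc i) (v : Fin d → ℝ)
    (H : ∀ x : Fin d → ℕ, (∑ i, v i * ((x i : ℝ) / cc i - 1))
        = ∑ k, κ k * (monPow cc (y k) * (monPow cc (y' k))⁻¹ * DF x (y' k) - DF x (y k))) :
    massActionRHS κ y y' cc = v ∧
    ∀ x, ∑ k, κ k * monPow cc (y k) * (gFun x cc (y' k) - gFun x cc (y k)) = 0 := by
  classical
  set Z : Finset (Fin d → ℕ) :=
    ((Finset.univ.image y' ∪ Finset.univ.image y) ∪ Finset.univ.image (eV (d := d)))
      ∪ {fun _ => 0} with hZ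
  have hmem_y' : ∀ k, y' k ∈ Z := fun k =>
    Finset.mem_union_left _ (Finset.mem_union_left _
      (Finset.mem_union_left _ (Finset.mem_image_of_mem y' (Finset.mem_univ k))))
  have hmem_y : ∀ k, y k ∈ Z := fun k =>
    Finset.mem_union_left _ (Finset.mem_union_left _
      (Finset.mem_union_right _ (Finset.mem_image_of_mem y (Finset.mem_univ k))))
  have hmem_e : ∀ i, eV i ∈ Z := fun i =>
    Finset.mem_union_left _
      (Finset.mem_union_right _ (Finset.mem_image_of_mem eV (Finset.mem_univ i)))
  have hmem_0 : (fun _ => 0 : Fin d → ℕ) ∈ Z :=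
    Finset.mem_union_right _ (Finset.mem_singleton_self _)
  set β : (Fin d → ℕ) → ℝ := fun z =>
      (∑ k ∈ Finset.univ.filter (fun k => y' k = z), κ k * monPow cc (y k) * (monPow cc z)⁻¹)
      - (∑ k ∈ Finset.univ.filter (fun k => y k = z), κ k)
      - (∑ i ∈ Finset.univ.filter (fun i => eV i = z), v i * (cc i)⁻¹)
      + (if (fun _ => 0 : Fin d → ℕ) = z then ∑ i, v i else 0) with hβdef
  have hS1 : ∀ x : Fin d → ℕ, ∑ z ∈ Z,
        (∑ k ∈ Finset.univ.filter (fun k => y' k = z),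
          κ k * monPow cc (y k) * (monPow cc z)⁻¹) * DF x z
      = ∑ k, κ k * (monPow cc (y k) * (monPow cc (y' k))⁻¹ * DF x (y' k)) := by
    intro x
    calc ∑ z ∈ Z, (∑ k ∈ Finset.univ.filter (fun k => y' k = z),
            κ k * monPow cc (y k) * (monPow cc z)⁻¹) * DF x z
        = ∑ z ∈ Z, ∑ k ∈ Finset.univ.filter (fun k => y' k = z),
            κ k * (monPow cc (y k) * (monPow cc (y' k))⁻¹ * DF x (y' k)) := by
          refine Finset.sum_congr rfl fun z hz => ?_
          rw [Finset.sum_mul]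
          refine Finset.sum_congr rfl fun k hk => ?_
          rw [(Finset.mem_filter.1 hk).2]; ring
      _ = _ := Finset.sum_fiberwise_of_maps_to (fun k _ => hmem_y' k) _
  have hS2 : ∀ x : Fin d → ℕ, ∑ z ∈ Z,
        (∑ k ∈ Finset.univ.filter (fun k => y k = z), κ k) * DF x z
      = ∑ k, κ k * DF x (y k) := by
    intro x
    calc ∑ z ∈ Z, (∑ k ∈ Finset.univ.filter (fun k => y k = z), κ k) * DF x z
        = ∑ z ∈ Z, ∑ k ∈ Finset.univ.filter (fun k => y k = z), κ k * DF x (y k) := by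
          refine Finset.sum_congr rfl fun z hz => ?_
          rw [Finset.sum_mul]
          refine Finset.sum_congr rfl fun k hk => ?_
          rw [(Finset.mem_filter.1 hk).2]
      _ = _ := Finset.sum_fiberwise_of_maps_to (fun k _ => hmem_y k) _
  have hS3 : ∀ x : Fin d → ℕ, ∑ z ∈ Z,
        (∑ i ∈ Finset.univ.filter (fun i => eV i = z), v i * (cc i)⁻¹) * DF x z
      = ∑ i, v i * (cc i)⁻¹ * (x i : ℝ) := by
    intro x
    calc ∑ z ∈ Z, (∑ i ∈ Finset.univ.filter (fun i => eV i = z), v i * (cc i)⁻¹) * DF x z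
        = ∑ z ∈ Z, ∑ i ∈ Finset.univ.filter (fun i => eV i = z),
            v i * (cc i)⁻¹ * DF x (eV i) := by
          refine Finset.sum_congr rfl fun z hz => ?_
          rw [Finset.sum_mul]
          refine Finset.sum_congr rfl fun i hi => ?_
          rw [(Finset.mem_filter.1 hi).2]
      _ = ∑ i, v i * (cc i)⁻¹ * DF x (eV i) :=
          Finset.sum_fiberwise_of_maps_to (fun i _ => hmem_e i) _
      _ = _ := Finset.sum_congr rfl fun i _ => by rw [DF_eV]
  have hsum0 : ∀ x : Fin d → ℕ, ∑ z ∈ Z, β z * DF x z = 0 := by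
    intro x
    have expand : ∑ z ∈ Z, β z * DF x z
        = ((∑ z ∈ Z, (∑ k ∈ Finset.univ.filter (fun k => y' k = z),
              κ k * monPow cc (y k) * (monPow cc z)⁻¹) * DF x z)
          - ∑ z ∈ Z, (∑ k ∈ Finset.univ.filter (fun k => y k = z), κ k) * DF x z)
          - (∑ z ∈ Z, (∑ i ∈ Finset.univ.filter (fun i => eV i = z), v i * (cc i)⁻¹) * DF x z)
          + ∑ z ∈ Z, (if (fun _ => 0 : Fin d → ℕ) = z then ∑ i, v i else 0) * DF x z := by
      simp only [hβdef]
      rw [← Finset.sum_sub_distrib, ← Finset.sum_sub_distrib, ← Finset.sum_add_distrib]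
      exact Finset.sum_congr rfl fun z _ => by ring
    have hS4 : ∑ z ∈ Z, (if (fun _ => 0 : Fin d → ℕ) = z then ∑ i, v i else 0) * DF x z
        = ∑ i, v i := by
      have e4 : ∀ z ∈ Z, (if (fun _ => 0 : Fin d → ℕ) = z then ∑ i, v i else 0) * DF x z
          = if (fun _ => 0 : Fin d → ℕ) = z then (∑ i, v i) * DF x z else 0 := fun z _ => by
        split_ifs <;> simp
      rw [Finset.sum_congr rfl e4,
        Finset.sum_ite_eq Z (fun _ => 0 : Fin d → ℕ) (fun z => (∑ i, v i) * DF x z),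
        if_pos hmem_0, DF_zero, mul_one]
    rw [expand, hS1 x, hS2 x, hS3 x, hS4]
    have hH := H x
    have hL : ∑ i, v i * ((x i : ℝ) / cc i - 1)
        = (∑ i, v i * (cc i)⁻¹ * (x i : ℝ)) - ∑ i, v i := by
      rw [← Finset.sum_sub_distrib]
      exact Finset.sum_congr rfl fun i _ => by rw [div_eq_mul_inv]; ring
    have hR : ∑ k, κ k * (monPow cc (y k) * (monPow cc (y' k))⁻¹ * DF x (y' k) - DF x (y k))
        = (∑ k, κ k * (monPow cc (y k) * (monPow cc (y' k))⁻¹ * DF x (y' k)))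
          - ∑ k, κ k * DF x (y k) := by
      rw [← Finset.sum_sub_distrib]
      exact Finset.sum_congr rfl fun k _ => by ring
    rw [hL, hR] at hH
    linarith
  have hβ0 := indep Z β hsum0
  have hv_eq : massActionRHS κ y y' cc = v := by
    funext j
    have hMj : massActionRHS κ y y' cc j
        = (∑ k, κ k * monPow cc (y k) * (y' k j : ℝ))
          - ∑ k, κ k * monPow cc (y k) * (y k j : ℝ) := by
      unfold massActionRHS zetaVec
      simp only [Finset.sum_apply, Pi.smul_apply, smul_eq_mul]
      rw [← Finset.sum_sub_distrib]
      exact Finset.sum_congr rfl fun k _ => by ring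
    have hT1 : ∑ k, κ k * monPow cc (y k) * (y' k j : ℝ)
        = ∑ z ∈ Z, ∑ k ∈ Finset.univ.filter (fun k => y' k = z),
            κ k * monPow cc (y k) * (z j : ℝ) := by
      have hfib := Finset.sum_fiberwise_of_maps_to (s := Finset.univ) (t := Z) (g := y')
        (fun k _ => hmem_y' k) (fun k => κ k * monPow cc (y k) * (y' k j : ℝ))
      rw [← hfib]
      refine Finset.sum_congr rfl fun z hz => Finset.sum_congr rfl fun k hk => ?_
      rw [(Finset.mem_filter.1 hk).2]
    have hT2 : ∑ k, κ k * monPow cc (y k) * (y k j : ℝ)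
        = ∑ z ∈ Z, (∑ k ∈ Finset.univ.filter (fun k => y k = z), κ k)
            * (monPow cc z * (z j : ℝ)) := by
      have hfib := Finset.sum_fiberwise_of_maps_to (s := Finset.univ) (t := Z) (g := y)
        (fun k _ => hmem_y k) (fun k => κ k * monPow cc (y k) * (y k j : ℝ))
      rw [← hfib]
      refine Finset.sum_congr rfl fun z hz => ?_
      rw [Finset.sum_mul]
      refine Finset.sum_congr rfl fun k hk => ?_
      rw [(Finset.mem_filter.1 hk).2]; ring
    have hper : ∀ z ∈ Z,
        (∑ k ∈ Finset.univ.filter (fun k => y' k = z), κ k * monPow cc (y k) * (z j : ℝ))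
          - (∑ k ∈ Finset.univ.filter (fun k => y k = z), κ k) * (monPow cc z * (z j : ℝ))
        = if eV j = z then v j else 0 := by
      intro z hz
      have hb := hβ0 z hz
      simp only [hβdef] at hb
      have hmz : monPow cc z ≠ 0 := ne_of_gt (monPow_pos hpos z)
      have hA : (∑ k ∈ Finset.univ.filter (fun k => y' k = z),
            κ k * monPow cc (y k) * (monPow cc z)⁻¹) * (monPow cc z * (z j : ℝ))
          = ∑ k ∈ Finset.univ.filter (fun k => y' k = z),
              κ k * monPow cc (y k) * (z j : ℝ) := by
        rw [Finset.sum_mul]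
        refine Finset.sum_congr rfl fun k _ => ?_
        field_simp
      by_cases hzj : z j = 0
      · have hrhs : ¬ (eV j = z) := by
          intro hcon; rw [← hcon] at hzj; simp [eV] at hzj
        rw [if_neg hrhs]
        simp [hzj]
      · have h0z : ¬ ((fun _ => 0 : Fin d → ℕ) = z) := by
          intro hcon; rw [← hcon] at hzj; exact hzj rfl
        rw [if_neg h0z, add_zero] at hb
        by_cases hez : eV j = z
        · have hfilter : Finset.univ.filter (fun i => eV i = z) = {j} := by
            ext i
            simp only [Finset.mem_filter, Finset.mem_univ, true_and, Finset.mem_singleton]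
            constructor
            · intro h; exact eV_inj (h.trans hez.symm)
            · intro h; rw [h]; exact hez
          rw [hfilter, Finset.sum_singleton] at hb
          rw [if_pos hez]
          have hm : monPow cc z = cc j := by rw [← hez, monPow_eV]
          have hz1 : (z j : ℝ) = 1 := by rw [← hez]; simp [eV]
          rw [← hA, hm, hz1]
          rw [hm] at hb
          have hcj : cc j ≠ 0 := ne_of_gt (hpos j)
          have key : (∑ k ∈ Finset.univ.filter (fun k => y' k = z),
                κ k * monPow cc (y k) * (cc j)⁻¹)
              - (∑ k ∈ Finset.univ.filter (fun k => y k = z), κ k)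
              = v j * (cc j)⁻¹ := by linarith
          calc (∑ k ∈ Finset.univ.filter (fun k => y' k = z),
                  κ k * monPow cc (y k) * (cc j)⁻¹) * (cc j * 1)
                - (∑ k ∈ Finset.univ.filter (fun k => y k = z), κ k) * (cc j * 1)
              = ((∑ k ∈ Finset.univ.filter (fun k => y' k = z),
                  κ k * monPow cc (y k) * (cc j)⁻¹)
                - (∑ k ∈ Finset.univ.filter (fun k => y k = z), κ k)) * cc j := by ring
            _ = v j * (cc j)⁻¹ * cc j := by rw [key]
            _ = v j := by field_simp
        · have hfilter : Finset.univ.filter (fun i => eV i = z) = ∅ := by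
            ext i
            simp only [Finset.mem_filter, Finset.mem_univ, true_and,
              Finset.notMem_empty, iff_false]
            intro hcon
            have hne0 : eV i j ≠ 0 := by rw [hcon]; exact hzj
            have hij : j = i := by by_contra hne; simp [eV, hne] at hne0
            obtain rfl := hij
            exact hez hcon
          rw [hfilter, Finset.sum_empty, sub_zero] at hb
          rw [if_neg hez, ← hA, sub_eq_zero.1 (by linarith : (∑ k ∈ Finset.univ.filter
            (fun k => y' k = z), κ k * monPow cc (y k) * (monPow cc z)⁻¹)
            - (∑ k ∈ Finset.univ.filter (fun k => y k = z), κ k) = 0), sub_self]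
    rw [hMj, hT1, hT2, ← Finset.sum_sub_distrib, Finset.sum_congr rfl hper,
      Finset.sum_ite_eq Z (eV j) (fun _ => v j), if_pos (hmem_e j)]
  refine ⟨hv_eq, fun x => ?_⟩
  have hH := H x
  rw [← hv_eq, massAction_dot, sum_bracket κ y y' cc hpos x] at hH
  linarith

end CMEAux

/-- Lemma 3.2: for `c : [0,∞) → ℝ^d_{>0}`, the product-Poisson function with parameter `c(t)`
solves the chemical master equation if and only if `c` is differentiable, solves the
mass-action ODE, and `Σ_k κ_k c(t)^{y_k} [g_{x,c(t)}(y'_k) - g_{x,c(t)}(y_k)] = 0` for all `x`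
and all `t ≥ 0`.  Moreover `g_{x,c}(z) = 0` whenever `‖z‖₁ ≤ 1`. -/
theorem productPoisson_solvesCME_iff_massAction_and_gBalance
    {d K : ℕ} (κ : Fin K → ℝ) (y y' : Fin K → Fin d → ℕ)
    (hκ : ∀ k, 0 ≤ κ k) (hyy' : ∀ k, y' k ≠ y k)
    (c : ℝ → Fin d → ℝ) (hcpos : ∀ t ≥ (0:ℝ), ∀ i, 0 < c t i) :
    (solvesCME κ y y' (fun x t => productPoisson (c t) x) ↔
      (solvesMassAction κ y y' c ∧
        ∀ x : Fin d → ℕ, ∀ t ≥ (0:ℝ),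
          ∑ k, κ k * monPow (c t) (y k) * (gFun x (c t) (y' k) - gFun x (c t) (y k)) = 0))
    ∧ (∀ (x z : Fin d → ℕ) (cc : Fin d → ℝ), (∀ i, 0 < cc i) → (∑ i, z i) ≤ 1 →
        gFun x cc z = 0) := by
  classical
  constructor
  · constructor
    · intro hCME
      have main : ∀ t, 0 ≤ t →
          HasDerivWithinAt c (massActionRHS κ y y' (c t)) (Set.Ici 0) t ∧
          ∀ x : Fin d → ℕ,
            ∑ k, κ k * monPow (c t) (y k) * (gFun x (c t) (y' k) - gFun x (c t) (y k)) = 0 := by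
        intro t ht
        have hpos : ∀ i, 0 < c t i := hcpos t ht
        have hP0 := hCME (fun _ => 0) t ht
        have hci : ∀ i : Fin d, ∃ vi, HasDerivWithinAt (fun τ => c τ i) vi (Set.Ici 0) t := by
          intro i
          have hPe := hCME (CMEAux.eV i) t ht
          have hdiv := hPe.div hP0 (ne_of_gt (CMEAux.productPoisson_zero_pos (c t)))
          refine ⟨_, hdiv.congr (fun τ _ => ?_) ?_⟩
          · show c τ i = productPoisson (c τ) (CMEAux.eV i) / productPoisson (c τ) (fun _ => 0)
            rw [CMEAux.productPoisson_eV (c τ) i, mul_comm, mul_div_assoc,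
              div_self (ne_of_gt (CMEAux.productPoisson_zero_pos (c τ))), mul_one]
          · show c t i = productPoisson (c t) (CMEAux.eV i) / productPoisson (c t) (fun _ => 0)
            rw [CMEAux.productPoisson_eV (c t) i, mul_comm, mul_div_assoc,
              div_self (ne_of_gt (CMEAux.productPoisson_zero_pos (c t))), mul_one]
        choose v hv using hci
        have hcderiv : HasDerivWithinAt c v (Set.Ici 0) t := hasDerivWithinAt_pi.2 hv
        have hU : UniqueDiffWithinAt ℝ (Set.Ici (0:ℝ)) t :=
          uniqueDiffOn_Ici 0 t (Set.mem_Ici.mpr ht)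
        have H : ∀ x : Fin d → ℕ, (∑ i, v i * ((x i : ℝ) / c t i - 1))
            = ∑ k, κ k * (monPow (c t) (y k) * (monPow (c t) (y' k))⁻¹ * CMEAux.DF x (y' k)
                - CMEAux.DF x (y k)) := by
          intro x
          have hd1 := CMEAux.hasDeriv_productPoisson hcderiv hpos x
          have hd2 := hCME x t ht
          have heq := (hd1.derivWithin hU).symm.trans (hd2.derivWithin hU)
          rw [CMEAux.cme_rhs_eq κ y y' (c t) hpos x] at heq
          exact mul_left_cancel₀ (ne_of_gt (CMEAux.productPoisson_pos (c t) x hpos)) heq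
        obtain ⟨hveq, hbal⟩ := CMEAux.key_alg κ y y' (c t) hpos v H
        exact ⟨hveq ▸ hcderiv, hbal⟩
      exact ⟨fun t ht => (main t ht).1, fun x t ht => (main t ht).2 x⟩
    · rintro ⟨hMA, hg⟩
      intro x t ht
      have hpos : ∀ i, 0 < c t i := hcpos t ht
      have hd := CMEAux.hasDeriv_productPoisson (hMA t ht) hpos x
      convert hd using 1
      rw [CMEAux.cme_rhs_eq κ y y' (c t) hpos x, CMEAux.sum_bracket κ y y' (c t) hpos x,
        hg x t ht, sub_zero, CMEAux.massAction_dot]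
  · exact fun x z cc h hz => CMEAux.gFun_small x z cc h hz
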